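/- Let B_1, …, B_k ∈ ℝ^d and V with ‖V‖ ≤ 1, and suppose V is added to the bin h minimizing ⟨V, B_h⟩. Write δ(i,j) = B_i − B_j, S = Σ_{i<j}‖δ(i,j)‖², S' for the value after the update, and e(i,j) for the unit vector along δ(i,j). If S > 0 and |⟨V, e(i,j)⟩| ≥ k²/√S for all i ≠ j with δ(i,j) ≠ 0, then S' − S < −k. -/

import Mathlib

open scoped RealInnerProductSpace

lemma half_sum (n : ℕ) (f : Fin n → Fin n → ℝ) (hsym : ∀ i j, f i j = f j i)
    (hdiag : ∀ i, f i i = 0) :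
    ∑ p ∈ Finset.univ.filter (fun p : Fin n × Fin n => p.1 < p.2), f p.1 p.2
      = (∑ i, ∑ j, f i j) / 2 := by
  have h1 : ∑ i, ∑ j, f i j = ∑ p : Fin n × Fin n, f p.1 p.2 := by
    rw [Fintype.sum_prod_type]
  rw [h1, ← Finset.sum_filter_add_sum_filter_not Finset.univ (fun p : Fin n × Fin n => p.1 < p.2)]
  have h2 : ∑ p ∈ Finset.univ.filter (fun p : Fin n × Fin n => ¬ p.1 < p.2), f p.1 p.2
      = ∑ p ∈ Finset.univ.filter (fun p : Fin n × Fin n => p.2 < p.1), f p.1 p.2 := by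
    rw [← Finset.sum_filter_add_sum_filter_not
      (Finset.univ.filter (fun p : Fin n × Fin n => ¬ p.1 < p.2))
      (fun p : Fin n × Fin n => p.2 < p.1)]
    have e1 : (Finset.univ.filter (fun p : Fin n × Fin n => ¬ p.1 < p.2)).filter
        (fun p : Fin n × Fin n => p.2 < p.1)
        = Finset.univ.filter (fun p : Fin n × Fin n => p.2 < p.1) := by
      rw [Finset.filter_filter]
      apply Finset.filter_congr
      intro p _
      constructor
      · rintro ⟨_, h⟩; exact h
      · intro h; exact ⟨not_lt_of_gt h, h⟩
    have e2 : ∑ p ∈ (Finset.univ.filter (fun p : Fin n × Fin n => ¬ p.1 < p.2)).filter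
        (fun p : Fin n × Fin n => ¬ p.2 < p.1), f p.1 p.2 = 0 := by
      apply Finset.sum_eq_zero
      intro p hp
      simp only [Finset.mem_filter] at hp
      have : p.1 = p.2 := le_antisymm (le_of_not_gt hp.2) (le_of_not_gt hp.1.2)
      rw [this]; exact hdiag _
    rw [e1, e2, add_zero]
  have h3 : ∑ p ∈ Finset.univ.filter (fun p : Fin n × Fin n => p.2 < p.1), f p.1 p.2
      = ∑ p ∈ Finset.univ.filter (fun p : Fin n × Fin n => p.1 < p.2), f p.1 p.2 := by
    apply Finset.sum_nbij' (fun p => Prod.swap p) (fun p => Prod.swap p) <;>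
      simp +contextual [hsym _ _]
  rw [h2, h3]
  ring

theorem observable_decrease (d k : ℕ) (hk : 2 ≤ k)
    (B : Fin k → EuclideanSpace ℝ (Fin d))
    (V : EuclideanSpace ℝ (Fin d)) (hV : ‖V‖ ≤ 1) (h : Fin k)
    (hrule : ∀ i, ⟪V, B h⟫ ≤ ⟪V, B i⟫)
    (B' : Fin k → EuclideanSpace ℝ (Fin d))
    (hB' : ∀ i, B' i = if i = h then B i + V else B i)
    (S S' : ℝ)
    (hS : S = ∑ p ∈ Finset.univ.filter (fun p : Fin k × Fin k => p.1 < p.2),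
        ‖B p.1 - B p.2‖ ^ 2)
    (hS' : S' = ∑ p ∈ Finset.univ.filter (fun p : Fin k × Fin k => p.1 < p.2),
        ‖B' p.1 - B' p.2‖ ^ 2)
    (hSpos : 0 < S)
    (hip : ∀ i j : Fin k, i ≠ j → B i - B j ≠ 0 →
      (k : ℝ) ^ 2 / Real.sqrt S ≤ abs ⟪V, ‖B i - B j‖⁻¹ • (B i - B j)⟫) :
    S' - S < -(k : ℝ) := by
  set c : Fin k → ℝ := fun j => ‖V‖^2 + 2*⟪V, B h - B j⟫ with hc
  set a : Fin k → ℝ := fun j => ‖B h - B j‖ with ha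
  set T : ℝ := ∑ j ∈ Finset.univ.erase h, a j with hT
  have hT0 : 0 ≤ T := Finset.sum_nonneg (fun j _ => norm_nonneg _)
  have hsq : 0 < Real.sqrt S := Real.sqrt_pos.2 hSpos
  -- step A : the difference formula
  have ht : ∀ i j, ‖B' i - B' j‖^2 - ‖B i - B j‖^2
      = if i = h then (if j = h then 0 else c j) else (if j = h then c i else 0) := by
    intro i j
    by_cases hi : i = h <;> by_cases hj : j = h <;>
      simp only [hB', hi, hj, if_true, if_false, ite_true, ite_false]
    · simp
    · rw [show B h + V - B j = (B h - B j) + V by abel, norm_add_sq_real, real_inner_comm]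
      simp only [hc]; ring
    · rw [show B i - (B h + V) = (B i - B h) - V by abel, norm_sub_sq_real]
      have hx : ⟪V, B h - B i⟫ = -⟪B i - B h, V⟫ := by
        rw [real_inner_comm, show B h - B i = -(B i - B h) by abel, inner_neg_left]
      simp only [hc, hx]; ring
    · simp
  have hS2 : S = (∑ i, ∑ j, ‖B i - B j‖^2)/2 := by
    rw [hS]
    exact half_sum k (fun i j => ‖B i - B j‖^2)
      (fun i j => by rw [norm_sub_rev]) (fun i => by simp)
  have hS'2 : S' = (∑ i, ∑ j, ‖B' i - B' j‖^2)/2 := by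
    rw [hS']
    exact half_sum k (fun i j => ‖B' i - B' j‖^2)
      (fun i j => by rw [norm_sub_rev]) (fun i => by simp)
  have key : ∑ i, ∑ j, (‖B' i - B' j‖^2 - ‖B i - B j‖^2)
      = 2 * ∑ j ∈ Finset.univ.erase h, c j := by
    rw [← Finset.add_sum_erase _ _ (Finset.mem_univ h)]
    have inner1 : ∑ j, (‖B' h - B' j‖^2 - ‖B h - B j‖^2) = ∑ j ∈ Finset.univ.erase h, c j := by
      calc ∑ j, (‖B' h - B' j‖^2 - ‖B h - B j‖^2)
          = ∑ j, (if j = h then (0:ℝ) else c j) := by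
            refine Finset.sum_congr rfl (fun j _ => ?_)
            rw [ht h j]; simp
        _ = (if h = h then (0:ℝ) else c h) + ∑ j ∈ Finset.univ.erase h, (if j = h then (0:ℝ) else c j) :=
            (Finset.add_sum_erase _ (fun j => if j = h then (0:ℝ) else c j)
              (Finset.mem_univ h)).symm
        _ = ∑ j ∈ Finset.univ.erase h, c j := by
            rw [if_pos rfl, zero_add]
            exact Finset.sum_congr rfl (fun j hj => if_neg (Finset.ne_of_mem_erase hj))
    have inner2 : ∀ i ∈ Finset.univ.erase h,
        ∑ j, (‖B' i - B' j‖^2 - ‖B i - B j‖^2) = c i := by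
      intro i hi
      have hih : i ≠ h := Finset.ne_of_mem_erase hi
      calc ∑ j, (‖B' i - B' j‖^2 - ‖B i - B j‖^2)
          = ∑ j, (if j = h then c i else 0) := by
            refine Finset.sum_congr rfl (fun j _ => ?_)
            rw [ht i j, if_neg hih]
        _ = c i := by simp
    rw [inner1, Finset.sum_congr rfl inner2]
    ring
  have hdiff : S' - S = ∑ j ∈ Finset.univ.erase h, c j := by
    rw [hS2, hS'2]
    have : ∑ i, ∑ j, ‖B' i - B' j‖^2 - ∑ i, ∑ j, ‖B i - B j‖^2
        = ∑ i, ∑ j, (‖B' i - B' j‖^2 - ‖B i - B j‖^2) := by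
      rw [← Finset.sum_sub_distrib]
      exact Finset.sum_congr rfl (fun i _ => by rw [← Finset.sum_sub_distrib])
    rw [div_sub_div_same, this, key]
    ring
  -- step B : bounds on a
  have hTa : ∀ i : Fin k, a i ≤ T := by
    intro i
    by_cases hi : i = h
    · subst hi; simpa [ha] using hT0
    · exact Finset.single_le_sum (f := a) (fun j _ => norm_nonneg _)
        (Finset.mem_erase.2 ⟨hi, Finset.mem_univ i⟩)
  have hpair : ∀ i j : Fin k, i ≠ j → ‖B i - B j‖ ≤ T := by
    intro i j hij
    have tri : ‖B i - B j‖ ≤ a i + a j := by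
      rw [show B i - B j = -(B h - B i) + (B h - B j) by abel]
      calc ‖-(B h - B i) + (B h - B j)‖ ≤ ‖-(B h - B i)‖ + ‖B h - B j‖ := norm_add_le _ _
        _ = a i + a j := by rw [norm_neg]
    by_cases hi : i = h
    · have hz : a i = 0 := by simp [ha, hi]
      linarith [hTa j]
    · by_cases hj : j = h
      · have hz : a j = 0 := by simp [ha, hj]
        linarith [hTa i]
      · have hsub : ({i, j} : Finset (Fin k)) ⊆ Finset.univ.erase h := by
          intro x hx
          simp only [Finset.mem_insert, Finset.mem_singleton] at hx
          rcases hx with rfl | rfl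
          · exact Finset.mem_erase.2 ⟨hi, Finset.mem_univ _⟩
          · exact Finset.mem_erase.2 ⟨hj, Finset.mem_univ _⟩
        have : a i + a j ≤ T := by
          rw [← Finset.sum_pair hij]
          exact Finset.sum_le_sum_of_subset_of_nonneg hsub (fun x _ _ => norm_nonneg _)
        linarith
  have hST : Real.sqrt S ≤ (k : ℝ) * T := by
    have hS_le : S ≤ ((k:ℝ)*T)^2 := by
      rw [hS]
      calc ∑ p ∈ Finset.univ.filter (fun p : Fin k × Fin k => p.1 < p.2), ‖B p.1 - B p.2‖ ^ 2
          ≤ ∑ _p ∈ Finset.univ.filter (fun p : Fin k × Fin k => p.1 < p.2), T^2 := by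
            refine Finset.sum_le_sum (fun p hp => ?_)
            have hlt : p.1 < p.2 := (Finset.mem_filter.1 hp).2
            exact pow_le_pow_left₀ (norm_nonneg _) (hpair p.1 p.2 (ne_of_lt hlt)) 2
        _ = ((Finset.univ.filter (fun p : Fin k × Fin k => p.1 < p.2)).card : ℝ) * T^2 := by
            rw [Finset.sum_const, nsmul_eq_mul]
        _ ≤ ((k:ℝ)^2) * T^2 := by
            apply mul_le_mul_of_nonneg_right _ (by positivity)
            have hcard : (Finset.univ.filter (fun p : Fin k × Fin k => p.1 < p.2)).card
                ≤ (Finset.univ : Finset (Fin k × Fin k)).card :=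
              Finset.card_filter_le _ _
            have : ((Finset.univ : Finset (Fin k × Fin k)).card : ℝ) = (k:ℝ)^2 := by
              simp [Finset.card_univ]; ring
            calc ((Finset.univ.filter (fun p : Fin k × Fin k => p.1 < p.2)).card : ℝ)
                ≤ ((Finset.univ : Finset (Fin k × Fin k)).card : ℝ) := by exact_mod_cast hcard
              _ = (k:ℝ)^2 := this
        _ = ((k:ℝ)*T)^2 := by ring
    calc Real.sqrt S ≤ Real.sqrt (((k:ℝ)*T)^2) := Real.sqrt_le_sqrt hS_le
      _ = (k:ℝ)*T := Real.sqrt_sq (by positivity)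
  -- step C : pointwise bound on c
  have hcb : ∀ j ∈ Finset.univ.erase h, c j ≤ 1 - 2*((k:ℝ)^2/Real.sqrt S)*a j := by
    intro j hj
    have hjh : j ≠ h := Finset.ne_of_mem_erase hj
    have h1 : ‖V‖^2 ≤ 1 := by nlinarith [norm_nonneg V]
    have h2 : ⟪V, B h - B j⟫ ≤ -(((k:ℝ)^2/Real.sqrt S) * a j) := by
      by_cases hz : B j - B h = 0
      · have hz' : B h - B j = 0 := by
          rw [show B h - B j = -(B j - B h) by abel, hz, neg_zero]
        simp [ha, hz']
      · have hip' := hip j h hjh hz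
        have hpos : (0:ℝ) ≤ ⟪V, B j - B h⟫ := by
          rw [inner_sub_right]
          exact sub_nonneg.2 (hrule j)
        have hnorm : (0:ℝ) < ‖B j - B h‖ := norm_pos_iff.2 hz
        rw [real_inner_smul_right, abs_of_nonneg (by positivity)] at hip'
        have h3 : (k:ℝ)^2/Real.sqrt S * ‖B j - B h‖ ≤ ⟪V, B j - B h⟫ := by
          calc (k:ℝ)^2/Real.sqrt S * ‖B j - B h‖
              ≤ ‖B j - B h‖⁻¹ * ⟪V, B j - B h⟫ * ‖B j - B h‖ :=
                mul_le_mul_of_nonneg_right hip' hnorm.le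
            _ = ⟪V, B j - B h⟫ := by
                rw [mul_comm (‖B j - B h‖⁻¹) _, mul_assoc,
                  inv_mul_cancel₀ hnorm.ne', mul_one]
        have h4 : ⟪V, B h - B j⟫ = -⟪V, B j - B h⟫ := by
          rw [show B h - B j = -(B j - B h) by abel, inner_neg_right]
        have h5 : a j = ‖B j - B h‖ := by rw [ha]; exact norm_sub_rev _ _
        rw [h4, h5]
        linarith
    have : c j = ‖V‖^2 + 2*⟪V, B h - B j⟫ := rfl
    rw [this]
    linarith
  -- final combination
  have hsum : S' - S ≤ ∑ j ∈ Finset.univ.erase h, (1 - 2*((k:ℝ)^2/Real.sqrt S)*a j) := by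
    rw [hdiff]
    exact Finset.sum_le_sum hcb
  have hsum2 : ∑ j ∈ Finset.univ.erase h, (1 - 2*((k:ℝ)^2/Real.sqrt S)*a j)
      = ((k:ℝ) - 1) - 2*((k:ℝ)^2/Real.sqrt S)*T := by
    rw [Finset.sum_sub_distrib, Finset.sum_const, ← Finset.mul_sum, ← hT]
    have hcard : (Finset.univ.erase h).card = k - 1 := by
      rw [Finset.card_erase_of_mem (Finset.mem_univ h), Finset.card_univ, Fintype.card_fin]
    rw [hcard, nsmul_eq_mul, Nat.cast_sub (by omega), Nat.cast_one]
    ring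
  have hbig : 2*(k:ℝ) ≤ 2*((k:ℝ)^2/Real.sqrt S)*T := by
    have hk0 : (0:ℝ) ≤ (k:ℝ) := Nat.cast_nonneg k
    have : (k:ℝ) * Real.sqrt S ≤ (k:ℝ)^2 * T := by
      calc (k:ℝ) * Real.sqrt S ≤ (k:ℝ) * ((k:ℝ) * T) := mul_le_mul_of_nonneg_left hST hk0
        _ = (k:ℝ)^2 * T := by ring
    have e : 2*((k:ℝ)^2/Real.sqrt S)*T = 2*((k:ℝ)^2*T)/Real.sqrt S := by ring
    rw [e, le_div_iff₀ hsq]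
    nlinarith
  have hk1 : (1:ℝ) ≤ (k:ℝ) := by exact_mod_cast Nat.one_le_of_lt hk
  linarith [hsum, hsum2.le, hbig]
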